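/- A right R-module M is absolutely pure if and only if M is a pure submodule of its injective hull. -/

import Mathlib

open TensorProduct MulOpposite

noncomputable section

/-- The tensor product `M ⊗_R N` of a right `R`-module `M` and a left `R`-module `N`,
constructed as a quotient of `M ⊗_ℤ N` by the balancing relations. -/
def BalancedRel (R : Type) [Ring R] (M N : Type) [AddCommGroup M] [Module Rᵐᵒᵖ M]
    [AddCommGroup N] [Module R N] : Submodule ℤ (M ⊗[ℤ] N) :=
  Submodule.span ℤ {x | ∃ (m : M) (r : R) (n : N),
    x = (op r • m) ⊗ₜ[ℤ] n - m ⊗ₜ[ℤ] (r • n)}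

def RTensor (R : Type) [Ring R] (M N : Type) [AddCommGroup M] [Module Rᵐᵒᵖ M]
    [AddCommGroup N] [Module R N] : Type :=
  M ⊗[ℤ] N ⧸ BalancedRel R M N

instance (R : Type) [Ring R] (M N : Type) [AddCommGroup M] [Module Rᵐᵒᵖ M]
    [AddCommGroup N] [Module R N] : AddCommGroup (RTensor R M N) :=
  inferInstanceAs (AddCommGroup (M ⊗[ℤ] N ⧸ BalancedRel R M N))

/-- `m ⊗ n` as an element of `RTensor R M N`. -/
def rtmk (R : Type) [Ring R] {M N : Type} [AddCommGroup M] [Module Rᵐᵒᵖ M]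
    [AddCommGroup N] [Module R N] (m : M) (n : N) : RTensor R M N :=
  Submodule.Quotient.mk (m ⊗ₜ[ℤ] n)

/-- The map `M ⊗_R N → M ⊗_R N'` induced by a map `f : N → N'` of left modules. -/
def lTensorMap (R : Type) [Ring R] {M N N' : Type} [AddCommGroup M] [Module Rᵐᵒᵖ M]
    [AddCommGroup N] [Module R N] [AddCommGroup N'] [Module R N']
    (f : N →ₗ[R] N') : RTensor R M N →ₗ[ℤ] RTensor R M N' :=
  Submodule.mapQ _ _ (LinearMap.lTensor M (f.restrictScalars ℤ)) (by
    rw [BalancedRel, Submodule.span_le]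
    rintro x ⟨m, r, n, rfl⟩
    refine Submodule.subset_span ⟨m, r, f n, ?_⟩
    show LinearMap.lTensor M (f.restrictScalars ℤ) ((op r • m) ⊗ₜ[ℤ] n - m ⊗ₜ[ℤ] (r • n)) =
      (op r • m) ⊗ₜ[ℤ] f n - m ⊗ₜ[ℤ] (r • f n)
    simp [map_sub])

/-- The map `M ⊗_R N → M' ⊗_R N` induced by a map `g : M → M'` of right modules. -/
def rTensorMap (R : Type) [Ring R] {M M' N : Type} [AddCommGroup M] [Module Rᵐᵒᵖ M]
    [AddCommGroup M'] [Module Rᵐᵒᵖ M'] [AddCommGroup N] [Module R N]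
    (g : M →ₗ[Rᵐᵒᵖ] M') : RTensor R M N →ₗ[ℤ] RTensor R M' N :=
  Submodule.mapQ _ _ (LinearMap.rTensor N (g.restrictScalars ℤ)) (by
    rw [BalancedRel, Submodule.span_le]
    rintro x ⟨m, r, n, rfl⟩
    refine Submodule.subset_span ⟨g m, r, n, ?_⟩
    show LinearMap.rTensor N (g.restrictScalars ℤ) ((op r • m) ⊗ₜ[ℤ] n - m ⊗ₜ[ℤ] (r • n)) =
      (op r • g m) ⊗ₜ[ℤ] n - g m ⊗ₜ[ℤ] (r • n)
    simp [map_sub])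

/-- A right `R`-module `M` is flat if tensoring with it preserves injectivity of
maps of left `R`-modules. -/
def IsFlatRight (R : Type) [Ring R] (M : Type) [AddCommGroup M] [Module Rᵐᵒᵖ M] : Prop :=
  ∀ (A B : Type) [AddCommGroup A] [Module R A] [AddCommGroup B] [Module R B]
    (f : A →ₗ[R] B), Function.Injective f →
      Function.Injective (lTensorMap R (M := M) f)

/-- A map of right `R`-modules is pure if tensoring with any left module preserves
its injectivity. -/
def IsPure (R : Type) [Ring R] {M N : Type} [AddCommGroup M] [Module Rᵐᵒᵖ M]
    [AddCommGroup N] [Module Rᵐᵒᵖ N] (j : M →ₗ[Rᵐᵒᵖ] N) : Prop :=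
  ∀ (L : Type) [AddCommGroup L] [Module R L],
    Function.Injective (rTensorMap R (N := L) j)

/-- A right `R`-module `M` is absolutely pure if every monomorphism with domain `M`
is a pure monomorphism. -/
def AbsolutelyPure (R : Type) [Ring R] (M : Type) [AddCommGroup M] [Module Rᵐᵒᵖ M] : Prop :=
  ∀ (N : Type) [AddCommGroup N] [Module Rᵐᵒᵖ N] (j : M →ₗ[Rᵐᵒᵖ] N),
    Function.Injective j → IsPure R j

section Aux

open CategoryTheory

variable (R : Type) [Ring R]

private lemma rTensorMap_mk {M M' L : Type}
    [AddCommGroup M] [Module Rᵐᵒᵖ M] [AddCommGroup M'] [Module Rᵐᵒᵖ M']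
    [AddCommGroup L] [Module R L] (f : M →ₗ[Rᵐᵒᵖ] M') (y : M ⊗[ℤ] L) :
    rTensorMap R (N := L) f (Submodule.Quotient.mk y) =
      Submodule.Quotient.mk (LinearMap.rTensor L (f.restrictScalars ℤ) y) :=
  Submodule.mapQ_apply _ _ _ y

private lemma rTensorMap_comp {M M' M'' L : Type}
    [AddCommGroup M] [Module Rᵐᵒᵖ M] [AddCommGroup M'] [Module Rᵐᵒᵖ M']
    [AddCommGroup M''] [Module Rᵐᵒᵖ M''] [AddCommGroup L] [Module R L]
    (g : M' →ₗ[Rᵐᵒᵖ] M'') (f : M →ₗ[Rᵐᵒᵖ] M') :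
    rTensorMap R (N := L) (g.comp f) =
      (rTensorMap R (N := L) g).comp (rTensorMap R (N := L) f) := by
  apply LinearMap.ext
  intro x
  rw [LinearMap.comp_apply]
  obtain ⟨y, rfl⟩ := Submodule.Quotient.mk_surjective _ x
  rw [rTensorMap_mk, rTensorMap_mk, rTensorMap_mk,
    LinearMap.restrictScalars_comp, LinearMap.rTensor_comp_apply]

/-- `A` is an essential submodule of `B`. -/
private def Ess {E : Type} [AddCommGroup E] [Module Rᵐᵒᵖ E]
    (A B : Submodule Rᵐᵒᵖ E) : Prop :=
  A ≤ B ∧ ∀ K : Submodule Rᵐᵒᵖ E, K ≤ B → K ⊓ A = ⊥ → K = ⊥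

private lemma exists_inj_ext (M : Type) [AddCommGroup M] [Module Rᵐᵒᵖ M] :
    ∃ (E : Type) (_ : AddCommGroup E) (_ : Module Rᵐᵒᵖ E) (f : M →ₗ[Rᵐᵒᵖ] E),
      Module.Injective Rᵐᵒᵖ E ∧ Function.Injective f := by
  let X := ModuleCat.of Rᵐᵒᵖ M
  let E := CategoryTheory.Injective.under X
  have hinjE : CategoryTheory.Injective (ModuleCat.of Rᵐᵒᵖ E) :=
    inferInstanceAs (CategoryTheory.Injective (CategoryTheory.Injective.under X))
  refine ⟨E, inferInstance, inferInstance, (CategoryTheory.Injective.ι X).hom, ?_, ?_⟩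
  · exact Module.injective_module_of_injective_object _ _
  · exact (ModuleCat.mono_iff_injective _).mp inferInstance

private lemma exists_hull (M : Type) [AddCommGroup M] [Module Rᵐᵒᵖ M] :
    ∃ (E : Type) (_ : AddCommGroup E) (_ : Module Rᵐᵒᵖ E) (i : M →ₗ[Rᵐᵒᵖ] E),
      Module.Injective Rᵐᵒᵖ E ∧ Function.Injective i ∧
        ∀ K : Submodule Rᵐᵒᵖ E, K ⊓ LinearMap.range i = ⊥ → K = ⊥ := by
  obtain ⟨E₀, _, _, f, hEinj, hf⟩ := exists_inj_ext R M
  set A := LinearMap.range f with hA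
  -- Zorn 1 : maximal essential extension `H` of `A` inside `E₀`
  obtain ⟨H, hAH, hHmax⟩ := zorn_le_nonempty₀ {H | Ess R A H}
    (fun c hcs hchain y hy => by
      refine ⟨sSup c, ⟨le_trans (hcs hy).1 (le_sSup hy), fun K hK hKA => ?_⟩,
        fun z hz => le_sSup hz⟩
      rw [eq_bot_iff]
      intro x hx
      have hxs : x ∈ sSup c := hK hx
      rw [Submodule.mem_sSup_of_directed ⟨y, hy⟩ hchain.directedOn] at hxs
      obtain ⟨H', hH'c, hxH'⟩ := hxs
      have hsx : Submodule.span Rᵐᵒᵖ ({x} : Set E₀) = ⊥ := by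
        refine (hcs hH'c).2 _ ((Submodule.span_le).2 (Set.singleton_subset_iff.2 hxH')) ?_
        rw [eq_bot_iff]
        exact le_trans (inf_le_inf_right A
          ((Submodule.span_le).2 (Set.singleton_subset_iff.2 hx))) hKA.le
      have hx0 := Submodule.mem_span_singleton_self (R := Rᵐᵒᵖ) x
      rw [hsx] at hx0
      exact hx0)
    A ⟨le_rfl, fun K hK h => by rwa [inf_eq_left.mpr hK] at h⟩
  -- Zorn 2 : maximal complement `K` of `H` in `E₀`
  obtain ⟨K, -, hKmax⟩ := zorn_le_nonempty₀ {K : Submodule Rᵐᵒᵖ E₀ | K ⊓ H = ⊥}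
    (fun c hcs hchain y hy => by
      refine ⟨sSup c, ?_, fun z hz => le_sSup hz⟩
      rw [Set.mem_setOf_eq, eq_bot_iff]
      intro x hx
      obtain ⟨hx1, hx2⟩ := Submodule.mem_inf.mp hx
      rw [Submodule.mem_sSup_of_directed ⟨y, hy⟩ hchain.directedOn] at hx1
      obtain ⟨K', hK'c, hxK'⟩ := hx1
      have : x ∈ K' ⊓ H := Submodule.mem_inf.mpr ⟨hxK', hx2⟩
      rwa [hcs hK'c] at this)
    ⊥ (by simp)
  have hKH : K ⊓ H = ⊥ := hKmax.1
  -- extend `H ↪ E₀` along `H → E₀ ⧸ K`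
  have hmono : Function.Injective ((K.mkQ).comp H.subtype) := by
    intro a b hab
    have : ((a : E₀) - (b : E₀)) ∈ K := by
      rwa [LinearMap.comp_apply, LinearMap.comp_apply, Submodule.mkQ_apply,
        Submodule.mkQ_apply, Submodule.Quotient.eq] at hab
    have h2 : ((a : E₀) - (b : E₀)) ∈ K ⊓ H := ⟨this, sub_mem a.2 b.2⟩
    rw [hKH] at h2
    exact Subtype.ext (sub_eq_zero.mp h2)
  obtain ⟨h, hh⟩ := hEinj.out ((K.mkQ).comp H.subtype) hmono H.subtype
  set T : E₀ →ₗ[Rᵐᵒᵖ] E₀ := h.comp K.mkQ with hT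
  have hTH : ∀ a ∈ H, T a = a := fun a ha => hh ⟨a, ha⟩
  have hTK : ∀ k ∈ K, T k = 0 := by
    intro k hk
    have : K.mkQ k = 0 := (Submodule.Quotient.mk_eq_zero K).2 hk
    simp [hT, this]
  have hHrange : H ≤ LinearMap.range T := fun a ha => ⟨a, hTH a ha⟩
  -- `H` is essential in `range T`
  have hEssHT : Ess R H (LinearMap.range T) := by
    refine ⟨hHrange, fun S hS hSH => ?_⟩
    rw [eq_bot_iff]
    intro s hsS
    by_contra hs0
    obtain ⟨x, rfl⟩ := hS hsS
    have hs0' : T x ≠ 0 := by simpa using hs0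
    have hxK : x ∉ K := fun hxK => hs0' (hTK x hxK)
    set N := Submodule.span Rᵐᵒᵖ ({x} : Set E₀) ⊔ K with hN
    have hxN : x ∈ N := Submodule.mem_sup_left (Submodule.mem_span_singleton_self x)
    have hNH : N ⊓ H ≠ ⊥ := fun hcontra =>
      hxK (hKmax.2 hcontra le_sup_right hxN)
    obtain ⟨a, haNH, ha0⟩ := (Submodule.ne_bot_iff _).mp hNH
    obtain ⟨haN, haH⟩ := Submodule.mem_inf.mp haNH
    obtain ⟨c, hc, k, hk, rfl⟩ := Submodule.mem_sup.mp haN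
    obtain ⟨r, rfl⟩ := Submodule.mem_span_singleton.mp hc
    have hTa : T (r • x + k) = r • T x := by
      rw [map_add, map_smul, hTK k hk, add_zero]
    have heq : r • x + k = r • T x := by rw [← hTa, hTH _ haH]
    have haS : r • x + k ∈ S := heq ▸ S.smul_mem r hsS
    have : r • x + k ∈ S ⊓ H := ⟨haS, haH⟩
    rw [hSH] at this
    exact ha0 this
  -- `range T = H` by maximality of `H`
  have hrangeT : LinearMap.range T = H := by
    have hEssAT : Ess R A (LinearMap.range T) := by
      refine ⟨le_trans hAH hHrange, fun S hS hSA => ?_⟩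
      have h1 : (S ⊓ H) ⊓ A = ⊥ := by
        rw [eq_bot_iff, ← hSA]
        exact le_inf (le_trans inf_le_left inf_le_left) inf_le_right
      have h2 : S ⊓ H = ⊥ := hHmax.1.2 _ inf_le_right h1
      exact hEssHT.2 S hS h2
    exact le_antisymm (hHmax.2 hEssAT hHrange) hHrange
  -- the hull is `↥H`
  have hfH : ∀ m : M, f m ∈ H := fun m => hAH ⟨m, rfl⟩
  set i : M →ₗ[Rᵐᵒᵖ] ↥H := f.codRestrict H hfH with hi
  have hTmemH : ∀ x : E₀, T x ∈ H := fun x => hrangeT ▸ LinearMap.mem_range_self T x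
  set π : E₀ →ₗ[Rᵐᵒᵖ] ↥H := T.codRestrict H hTmemH with hπ
  refine ⟨↥H, inferInstance, inferInstance, i, ?_, ?_, ?_⟩
  · -- `↥H` is injective, being a retract of `E₀`
    constructor
    intro X Y _ _ _ _ fXY hfXY g
    obtain ⟨G, hG⟩ := hEinj.out fXY hfXY (H.subtype.comp g)
    refine ⟨π.comp G, fun x => ?_⟩
    apply Subtype.ext
    have : (π (G (fXY x)) : E₀) = T (G (fXY x)) := rfl
    rw [LinearMap.comp_apply, this, hG x, LinearMap.comp_apply]
    exact hTH _ (g x).2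
  · -- `i` is injective
    intro a b hab
    exact hf (congrArg Subtype.val hab)
  · -- essentiality
    intro K' hK'
    have hmap : (K'.map H.subtype) ⊓ A = ⊥ := by
      rw [eq_bot_iff]
      rintro x ⟨hx1, hx2⟩
      obtain ⟨y, hyK', rfl⟩ := hx1
      obtain ⟨m, hm⟩ := hx2
      have hyi : y ∈ LinearMap.range i := ⟨m, Subtype.ext hm⟩
      have : y ∈ K' ⊓ LinearMap.range i := ⟨hyK', hyi⟩
      rw [hK'] at this
      have hy0 : y = 0 := (Submodule.mem_bot _).mp this
      simp [hy0]
    have : K'.map H.subtype = ⊥ := hHmax.1.2 _ (Submodule.map_subtype_le H K') hmap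
    rw [eq_bot_iff]
    intro y hy
    have : (y : E₀) ∈ K'.map H.subtype := ⟨y, hy, rfl⟩
    rw [‹K'.map H.subtype = ⊥›] at this
    simpa using Subtype.ext (by simpa using this : (y : E₀) = 0)

end Aux

/-- A right `R`-module `M` is absolutely pure iff `M` is a pure submodule of its
injective hull, i.e. iff for every injective module `E` and every essential
monomorphism `i : M → E`, the map `i` is pure. -/
theorem absolutelyPure_iff_pure_in_injective_hull (R : Type) [Ring R]
    (M : Type) [AddCommGroup M] [Module Rᵐᵒᵖ M] :
    AbsolutelyPure R M ↔
      ∀ (E : Type) [AddCommGroup E] [Module Rᵐᵒᵖ E] (i : M →ₗ[Rᵐᵒᵖ] E),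
        Module.Injective Rᵐᵒᵖ E → Function.Injective i →
          (∀ K : Submodule Rᵐᵒᵖ E, K ⊓ LinearMap.range i = ⊥ → K = ⊥) →
            IsPure R i := by
  constructor
  · intro h E _ _ i _ hi _
    exact h E i hi
  · intro h N _ _ j hj L _ _
    obtain ⟨E, _, _, i, hEinj, hi, hess⟩ := exists_hull R M
    have hpure : IsPure R i := h E i hEinj hi hess
    obtain ⟨φ, hφ⟩ := hEinj.out j hj i
    have hcomp : rTensorMap R (N := L) i =
        (rTensorMap R (N := L) φ).comp (rTensorMap R (N := L) j) := by
      rw [← rTensorMap_comp]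
      congr 1
      exact (LinearMap.ext hφ).symm
    have hinj := hpure L
    rw [hcomp, LinearMap.coe_comp] at hinj
    exact hinj.of_comp
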